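/- Error-accumulation bound for online trajectories (Theorem 'alg-perf-bound-err-inject'). Suppose for each time τ ∈ {1,…,H} the global hitting cost f_τ : ℝ^m → ℝ_{≥0} is μ-strongly convex, ℓ_T-smooth and C², and the global switching cost c_τ : ℝ^m × ℝ^m → ℝ_{≥0} is convex, ℓ_T-smooth and C². For y ∈ ℝ^m let ψ̃_t(y) denote the minimizer of ∑_{τ=t}^{H} ( f_τ(x_τ) + c_τ(x_τ, x_{τ-1}) ) over x_{t:H} subject to x_{t-1} = y. Let x₀, x₁*, …, x_H* be the offline optimal trajectory (so x_τ* = ψ̃₁(x₀)_τ), let x₀, x₁, …, x_H be an arbitrary trajectory, and define the per-step errors e_t = ‖x_t − ψ̃_t(x_{t-1})_t‖. Then ∑_{t=1}^H ‖x_t − x_t*‖² ≤ (C₀²/(1 − ρ_G)²) ∑_{t=1}^H e_t², where ρ_G = 1 − 2/(√(1 + 2ℓ_T/μ) + 1) and C₀ = max{1, 2ℓ_T/μ}. -/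

import Mathlib

noncomputable section

/-- `h` is `ℓ`-smooth: differentiable with
`h(y) ≤ h(x) + ⟨∇h(x), y−x⟩ + (ℓ/2)‖y−x‖²` for all `x, y`. -/
def IsLSmooth {F : Type*} [NormedAddCommGroup F] [NormedSpace ℝ F] (ℓ : ℝ) (h : F → ℝ) : Prop :=
  Differentiable ℝ h ∧
    ∀ x y, h y ≤ h x + fderiv ℝ h x (y - x) + ℓ / 2 * ‖y - x‖ ^ 2

/-- `h` is `μ`-strongly convex: differentiable with
`h(y) ≥ h(x) + ⟨∇h(x), y−x⟩ + (μ/2)‖y−x‖²` for all `x, y`. -/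
def IsStronglyConvex {F : Type*} [NormedAddCommGroup F] [NormedSpace ℝ F] (μ : ℝ) (h : F → ℝ) :
    Prop :=
  Differentiable ℝ h ∧
    ∀ x y, h x + fderiv ℝ h x (y - x) + μ / 2 * ‖y - x‖ ^ 2 ≤ h y

/-- A two-argument cost viewed as a function on the product space `ℝ^m × ℝ^m`
equipped with the Euclidean (ℓ²) norm. -/
def pairFun {m : ℕ} (c : EuclideanSpace ℝ (Fin m) → EuclideanSpace ℝ (Fin m) → ℝ) :
    WithLp 2 (EuclideanSpace ℝ (Fin m) × EuclideanSpace ℝ (Fin m)) → ℝ :=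
  fun P => c (WithLp.equiv 2 _ P).1 (WithLp.equiv 2 _ P).2

section Aux
variable {F : Type*} [NormedAddCommGroup F] [NormedSpace ℝ F]

lemma IsLSmooth.add' {L1 L2 : ℝ} {h1 h2 : F → ℝ} (H1 : IsLSmooth L1 h1)
    (H2 : IsLSmooth L2 h2) : IsLSmooth (L1 + L2) (fun z => h1 z + h2 z) := by
  refine ⟨H1.1.add H2.1, fun a b => ?_⟩
  have hd : fderiv ℝ (fun z => h1 z + h2 z) a = fderiv ℝ h1 a + fderiv ℝ h2 a :=
    fderiv_add (H1.1 a) (H2.1 a)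
  have k1 := H1.2 a b
  have k2 := H2.2 a b
  rw [hd]
  simp only [ContinuousLinearMap.add_apply]
  have : (L1 + L2) / 2 * ‖b - a‖ ^ 2 = L1 / 2 * ‖b - a‖ ^ 2 + L2 / 2 * ‖b - a‖ ^ 2 := by ring
  linarith

lemma IsLSmooth.quadGrowth {L : ℝ} {h : F → ℝ} (H : IsLSmooth L h) {z0 : F}
    (hmin : ∀ z, h z0 ≤ h z) (z : F) : h z ≤ h z0 + L / 2 * ‖z - z0‖ ^ 2 := by
  have hloc : IsLocalMin h z0 := Filter.Eventually.of_forall hmin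
  have h0 : fderiv ℝ h z0 = 0 := hloc.fderiv_eq_zero
  have := H.2 z0 z
  rw [h0] at this
  simpa using this

end Aux

section Partial
variable {m : ℕ} {L : ℝ} {g : EuclideanSpace ℝ (Fin m) → EuclideanSpace ℝ (Fin m) → ℝ}

local notation "E" => EuclideanSpace ℝ (Fin m)
local notation "W" => WithLp 2 (EuclideanSpace ℝ (Fin m) × EuclideanSpace ℝ (Fin m))

lemma norm_symm_pair (a b : E) :
    ‖((WithLp.equiv 2 (E × E)).symm (a, b) : W)‖ = Real.sqrt (‖a‖ ^ 2 + ‖b‖ ^ 2) := by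
  rw [WithLp.prod_norm_eq_of_L2]
  rfl

lemma isLSmooth_partial_left (hg : IsLSmooth L (pairFun g)) (b : E) :
    IsLSmooth L (fun z => g z b) := by
  let J : E →L[ℝ] W :=
    ((WithLp.prodContinuousLinearEquiv 2 ℝ E E).symm.toContinuousLinearMap).comp
      (ContinuousLinearMap.inl ℝ E E)
  let C : W := (WithLp.equiv 2 (E × E)).symm (0, b)
  have hJ : ∀ z : E, J z = (WithLp.equiv 2 (E × E)).symm (z, 0) := fun z => rfl
  have hT : ∀ z : E, J z + C = (WithLp.equiv 2 (E × E)).symm (z, b) := by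
    intro z
    rw [hJ, show C = (WithLp.equiv 2 (E × E)).symm (0, b) from rfl, WithLp.equiv_symm_apply, ← WithLp.toLp_add, Prod.mk_add_mk, add_zero, zero_add]
  have hval : ∀ z : E, pairFun g ((WithLp.equiv 2 (E × E)).symm (z, b)) = g z b := by
    intro z; simp [pairFun]
  have hder : ∀ z : E, HasFDerivAt (fun w => g w b)
      ((fderiv ℝ (pairFun g) ((WithLp.equiv 2 (E × E)).symm (z, b))).comp J) z := by
    intro z
    have h1 : HasFDerivAt (fun w : E => J w + C) J z := J.hasFDerivAt.add_const C
    have h2 := (hg.1 (J z + C)).hasFDerivAt.comp z h1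
    rw [hT z] at h2
    simp only [Function.comp_def] at h2
    have h3 : (fun w => pairFun g (J w + C)) = fun w => g w b := by
      funext w; rw [hT w, hval w]
    rwa [h3] at h2
  refine ⟨fun z => (hder z).differentiableAt, fun u v => ?_⟩
  have hfd : fderiv ℝ (fun z => g z b) u
      = (fderiv ℝ (pairFun g) ((WithLp.equiv 2 (E × E)).symm (u, b))).comp J := (hder u).fderiv
  have key := hg.2 ((WithLp.equiv 2 (E × E)).symm (u, b)) ((WithLp.equiv 2 (E × E)).symm (v, b))
  rw [hval, hval] at key
  have hsub : ((WithLp.equiv 2 (E × E)).symm (v, b) : W) - (WithLp.equiv 2 (E × E)).symm (u, b)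
      = (WithLp.equiv 2 (E × E)).symm (v - u, 0) := by
    rw [WithLp.equiv_symm_apply, ← WithLp.toLp_sub, Prod.mk_sub_mk, sub_self]
  have hnorm : ‖((WithLp.equiv 2 (E × E)).symm (v, b) : W)
      - (WithLp.equiv 2 (E × E)).symm (u, b)‖ = ‖v - u‖ := by
    rw [hsub, norm_symm_pair]
    simp [Real.sqrt_sq (norm_nonneg _)]
  have happ : (fderiv ℝ (pairFun g) ((WithLp.equiv 2 (E × E)).symm (u, b)))
        (((WithLp.equiv 2 (E × E)).symm (v, b) : W) - (WithLp.equiv 2 (E × E)).symm (u, b))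
      = (fderiv ℝ (fun z => g z b) u) (v - u) := by
    rw [hfd, hsub, ContinuousLinearMap.comp_apply, hJ]
  rw [happ, hnorm] at key
  exact key

lemma isLSmooth_partial_right (hg : IsLSmooth L (pairFun g)) (a : E) :
    IsLSmooth L (fun z => g a z) := by
  let J : E →L[ℝ] W :=
    ((WithLp.prodContinuousLinearEquiv 2 ℝ E E).symm.toContinuousLinearMap).comp
      (ContinuousLinearMap.inr ℝ E E)
  let C : W := (WithLp.equiv 2 (E × E)).symm (a, 0)
  have hJ : ∀ z : E, J z = (WithLp.equiv 2 (E × E)).symm (0, z) := fun z => rfl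
  have hT : ∀ z : E, J z + C = (WithLp.equiv 2 (E × E)).symm (a, z) := by
    intro z
    rw [hJ, show C = (WithLp.equiv 2 (E × E)).symm (a, 0) from rfl, WithLp.equiv_symm_apply, ← WithLp.toLp_add, Prod.mk_add_mk, add_zero, zero_add]
  have hval : ∀ z : E, pairFun g ((WithLp.equiv 2 (E × E)).symm (a, z)) = g a z := by
    intro z; simp [pairFun]
  have hder : ∀ z : E, HasFDerivAt (fun w => g a w)
      ((fderiv ℝ (pairFun g) ((WithLp.equiv 2 (E × E)).symm (a, z))).comp J) z := by
    intro z
    have h1 : HasFDerivAt (fun w : E => J w + C) J z := J.hasFDerivAt.add_const C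
    have h2 := (hg.1 (J z + C)).hasFDerivAt.comp z h1
    rw [hT z] at h2
    simp only [Function.comp_def] at h2
    have h3 : (fun w => pairFun g (J w + C)) = fun w => g a w := by
      funext w; rw [hT w, hval w]
    rwa [h3] at h2
  refine ⟨fun z => (hder z).differentiableAt, fun u v => ?_⟩
  have hfd : fderiv ℝ (fun z => g a z) u
      = (fderiv ℝ (pairFun g) ((WithLp.equiv 2 (E × E)).symm (a, u))).comp J := (hder u).fderiv
  have key := hg.2 ((WithLp.equiv 2 (E × E)).symm (a, u)) ((WithLp.equiv 2 (E × E)).symm (a, v))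
  rw [hval, hval] at key
  have hsub : ((WithLp.equiv 2 (E × E)).symm (a, v) : W) - (WithLp.equiv 2 (E × E)).symm (a, u)
      = (WithLp.equiv 2 (E × E)).symm (0, v - u) := by
    rw [WithLp.equiv_symm_apply, ← WithLp.toLp_sub, Prod.mk_sub_mk, sub_self]
  have hnorm : ‖((WithLp.equiv 2 (E × E)).symm (a, v) : W)
      - (WithLp.equiv 2 (E × E)).symm (a, u)‖ = ‖v - u‖ := by
    rw [hsub, norm_symm_pair]
    simp [Real.sqrt_sq (norm_nonneg _)]
  have happ : (fderiv ℝ (pairFun g) ((WithLp.equiv 2 (E × E)).symm (a, u)))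
        (((WithLp.equiv 2 (E × E)).symm (a, v) : W) - (WithLp.equiv 2 (E × E)).symm (a, u))
      = (fderiv ℝ (fun z => g a z) u) (v - u) := by
    rw [hfd, hsub, ContinuousLinearMap.comp_apply, hJ]
  rw [happ, hnorm] at key
  exact key

end Partial

set_option maxHeartbeats 2000000 in
/-- **Error-accumulation bound for online trajectories.** For `τ ∈ {1,…,H}` the hitting
cost `f_τ : ℝ^m → ℝ_{≥0}` is `μ`-strongly convex, `ℓ_T`-smooth and `C²`, the switching
cost `c_τ` is convex, `ℓ_T`-smooth and `C²`; `ψ t y` is the minimizer of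
`∑_{τ=t}^H (f_τ(x_τ) + c_τ(x_τ,x_{τ-1}))` subject to `x_{t-1} = y`. With offline optimum
`x*_τ = (ψ 1 x₀)_τ`, an arbitrary trajectory `x` and per-step errors
`e_t = ‖x_t − (ψ t x_{t-1})_t‖`, we have
`∑_{t=1}^H ‖x_t − x_t*‖² ≤ (C₀²/(1−ρ_G)²) ∑_{t=1}^H e_t²` where
`ρ_G = 1 − 2/(√(1+2ℓ_T/μ)+1)` and `C₀ = max{1, 2ℓ_T/μ}`. -/
theorem stmt4 {m : ℕ} (μ ℓT : ℝ) (hμ : 0 < μ) (hℓT : 0 ≤ ℓT) (H : ℕ) (hH : 1 ≤ H)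
    (f : ℕ → EuclideanSpace ℝ (Fin m) → ℝ)
    (c : ℕ → EuclideanSpace ℝ (Fin m) → EuclideanSpace ℝ (Fin m) → ℝ)
    (hf : ∀ τ ∈ Finset.Icc 1 H, IsStronglyConvex μ (f τ) ∧ IsLSmooth ℓT (f τ) ∧
      (∀ x, 0 ≤ f τ x) ∧ ContDiff ℝ 2 (f τ))
    (hc : ∀ τ ∈ Finset.Icc 1 H, ConvexOn ℝ Set.univ (pairFun (c τ)) ∧
      IsLSmooth ℓT (pairFun (c τ)) ∧ (∀ x x', 0 ≤ c τ x x') ∧ ContDiff ℝ 2 (pairFun (c τ)))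
    (ψ : ℕ → EuclideanSpace ℝ (Fin m) → (ℕ → EuclideanSpace ℝ (Fin m)))
    (hψ : ∀ t ∈ Finset.Icc 1 H, ∀ y,
      ψ t y (t - 1) = y ∧
        IsMinOn
          (fun X : ℕ → EuclideanSpace ℝ (Fin m) =>
            ∑ τ ∈ Finset.Icc t H, (f τ (X τ) + c τ (X τ) (X (τ - 1))))
          {X | X (t - 1) = y} (ψ t y))
    (x : ℕ → EuclideanSpace ℝ (Fin m)) :
    ∑ t ∈ Finset.Icc 1 H, ‖x t - ψ 1 (x 0) t‖ ^ 2 ≤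
      (max 1 (2 * ℓT / μ)) ^ 2 / (1 - (1 - 2 / (Real.sqrt (1 + 2 * ℓT / μ) + 1))) ^ 2 *
        ∑ t ∈ Finset.Icc 1 H, ‖x t - ψ t (x (t - 1)) t‖ ^ 2 := by
  classical
  rcases Nat.eq_zero_or_pos m with hm | hm
  · subst hm
    have hz : ∀ u v : EuclideanSpace ℝ (Fin 0), u = v := by
      intro u v; ext i; exact i.elim0
    have hL : ∑ t ∈ Finset.Icc 1 H, ‖x t - ψ 1 (x 0) t‖ ^ 2 = 0 :=
      Finset.sum_eq_zero fun t _ => by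
        rw [hz (x t) (ψ 1 (x 0) t), sub_self, norm_zero]; norm_num
    rw [hL]
    positivity
  have h1H : (1 : ℕ) ∈ Finset.Icc 1 H := Finset.mem_Icc.mpr ⟨le_rfl, hH⟩
  -- μ ≤ ℓT
  have hμℓ : μ ≤ ℓT := by
    have hv : ‖(EuclideanSpace.single (⟨0, hm⟩ : Fin m) (1 : ℝ))‖ = 1 := by simp
    have k1 := (hf 1 h1H).1.2 0 (EuclideanSpace.single (⟨0, hm⟩ : Fin m) (1 : ℝ))
    have k2 := (hf 1 h1H).2.1.2 0 (EuclideanSpace.single (⟨0, hm⟩ : Fin m) (1 : ℝ))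
    rw [sub_zero] at k1 k2
    rw [hv] at k1 k2
    norm_num at k1 k2
    linarith
  set G : (ℕ → EuclideanSpace ℝ (Fin m)) → ℝ :=
    fun X => ∑ τ ∈ Finset.Icc 1 H, (f τ (X τ) + c τ (X τ) (X (τ - 1))) with hG
  set xs : ℕ → EuclideanSpace ℝ (Fin m) := ψ 1 (x 0) with hxsdef
  have hψ0 : xs 0 = x 0 := by simpa using (hψ 1 h1H (x 0)).1
  set Xs : ℕ → ℕ → EuclideanSpace ℝ (Fin m) :=
    fun s τ => if τ ≤ s then x τ else ψ (s + 1) (x s) τ with hXs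
  have hXsval : ∀ s τ, Xs s τ = if τ ≤ s then x τ else ψ (s + 1) (x s) τ := fun _ _ => rfl
  set S := ∑ t ∈ Finset.Icc 1 H, ‖x t - xs t‖ ^ 2 with hSdef
  set Eσ := ∑ t ∈ Finset.Icc 1 H, ‖x t - ψ t (x (t - 1)) t‖ ^ 2 with hEσdef
  -- split lemma
  have hsplitAt : ∀ t : ℕ, 1 ≤ t → t ≤ H + 1 → ∀ Z : ℕ → EuclideanSpace ℝ (Fin m),
      G Z = (∑ τ ∈ Finset.Ico 1 t, (f τ (Z τ) + c τ (Z τ) (Z (τ - 1))))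
        + ∑ τ ∈ Finset.Icc t H, (f τ (Z τ) + c τ (Z τ) (Z (τ - 1))) := by
    intro t ht1 ht2 Z
    simp only [hG]
    rw [← Finset.Ico_add_one_right_eq_Icc, ← Finset.Ico_add_one_right_eq_Icc]
    exact (Finset.sum_Ico_consecutive _ ht1 ht2).symm
  -- step A
  have hA : G (Xs H) = G x := by
    apply Finset.sum_congr rfl
    intro τ hτ
    rw [Finset.mem_Icc] at hτ
    rw [hXsval, hXsval, if_pos hτ.2, if_pos (by omega : τ - 1 ≤ H)]
  -- step B
  have hB : G (Xs 0) = G xs := by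
    apply Finset.sum_congr rfl
    intro τ hτ
    rw [Finset.mem_Icc] at hτ
    have e1 : Xs 0 τ = xs τ := by rw [hXsval, if_neg (by omega)]
    have e2 : Xs 0 (τ - 1) = xs (τ - 1) := by
      rw [hXsval]
      by_cases h : τ - 1 ≤ 0
      · rw [if_pos h]
        have : τ - 1 = 0 := by omega
        rw [this, hψ0]
      · rw [if_neg h]
    rw [e1, e2]
  -- step E : strong convexity lower bound
  have hE : μ / 4 * S ≤ G x - G xs := by
    set M : ℕ → EuclideanSpace ℝ (Fin m) :=
      fun τ => (2⁻¹ : ℝ) • x τ + (2⁻¹ : ℝ) • xs τ with hMdef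
    have hM0 : M 0 = x 0 := by
      show (2⁻¹ : ℝ) • x 0 + (2⁻¹ : ℝ) • xs 0 = x 0
      rw [hψ0]; module
    have hGM : G xs ≤ G M := by
      have hmem : M ∈ {X : ℕ → EuclideanSpace ℝ (Fin m) | X (1 - 1) = x 0} := by
        simpa using hM0
      exact isMinOn_iff.mp (hψ 1 h1H (x 0)).2 M hmem
    have key : ∀ τ ∈ Finset.Icc 1 H,
        2 * (f τ (M τ) + c τ (M τ) (M (τ - 1))) + μ / 4 * ‖x τ - xs τ‖ ^ 2
          ≤ (f τ (x τ) + c τ (x τ) (x (τ - 1))) + (f τ (xs τ) + c τ (xs τ) (xs (τ - 1))) := by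
      intro τ hτ
      have k1 := (hf τ hτ).1.2 (M τ) (x τ)
      have k2 := (hf τ hτ).1.2 (M τ) (xs τ)
      have e0 : (x τ - M τ) + (xs τ - M τ) = 0 := by
        show (x τ - ((2⁻¹ : ℝ) • x τ + (2⁻¹ : ℝ) • xs τ))
          + (xs τ - ((2⁻¹ : ℝ) • x τ + (2⁻¹ : ℝ) • xs τ)) = 0
        module
      have ed : fderiv ℝ (f τ) (M τ) (x τ - M τ) + fderiv ℝ (f τ) (M τ) (xs τ - M τ) = 0 := by
        rw [← map_add, e0, map_zero]
      have e1 : x τ - M τ = (2⁻¹ : ℝ) • (x τ - xs τ) := by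
        show x τ - ((2⁻¹ : ℝ) • x τ + (2⁻¹ : ℝ) • xs τ) = (2⁻¹ : ℝ) • (x τ - xs τ)
        module
      have e2 : xs τ - M τ = (2⁻¹ : ℝ) • (xs τ - x τ) := by
        show xs τ - ((2⁻¹ : ℝ) • x τ + (2⁻¹ : ℝ) • xs τ) = (2⁻¹ : ℝ) • (xs τ - x τ)
        module
      have n1 : ‖x τ - M τ‖ ^ 2 = 4⁻¹ * ‖x τ - xs τ‖ ^ 2 := by
        rw [e1, norm_smul, Real.norm_eq_abs, abs_of_nonneg (by norm_num : (0:ℝ) ≤ 2⁻¹)]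
        ring
      have n2 : ‖xs τ - M τ‖ ^ 2 = 4⁻¹ * ‖x τ - xs τ‖ ^ 2 := by
        rw [e2, norm_smul, Real.norm_eq_abs, abs_of_nonneg (by norm_num : (0:ℝ) ≤ 2⁻¹),
          norm_sub_rev]
        ring
      rw [n1] at k1
      rw [n2] at k2
      have hcv := (hc τ hτ).1
      have hmid := hcv.2
        (Set.mem_univ ((WithLp.equiv 2
          (EuclideanSpace ℝ (Fin m) × EuclideanSpace ℝ (Fin m))).symm (x τ, x (τ - 1))))
        (Set.mem_univ ((WithLp.equiv 2
          (EuclideanSpace ℝ (Fin m) × EuclideanSpace ℝ (Fin m))).symm (xs τ, xs (τ - 1))))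
        (by norm_num : (0:ℝ) ≤ 2⁻¹) (by norm_num : (0:ℝ) ≤ 2⁻¹) (by norm_num)
      have hpt : ((2⁻¹ : ℝ) • (WithLp.equiv 2
            (EuclideanSpace ℝ (Fin m) × EuclideanSpace ℝ (Fin m))).symm (x τ, x (τ - 1))
          + (2⁻¹ : ℝ) • (WithLp.equiv 2
            (EuclideanSpace ℝ (Fin m) × EuclideanSpace ℝ (Fin m))).symm (xs τ, xs (τ - 1)))
          = (WithLp.equiv 2
            (EuclideanSpace ℝ (Fin m) × EuclideanSpace ℝ (Fin m))).symm (M τ, M (τ - 1)) := by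
        rw [WithLp.equiv_symm_apply, ← WithLp.toLp_smul, ← WithLp.toLp_smul, ← WithLp.toLp_add,
          Prod.smul_mk, Prod.smul_mk, Prod.mk_add_mk]
      rw [hpt] at hmid
      simp only [pairFun, Equiv.apply_symm_apply, smul_eq_mul] at hmid
      linarith
    have hsum := Finset.sum_le_sum key
    rw [Finset.sum_add_distrib, Finset.sum_add_distrib, ← Finset.mul_sum, ← Finset.mul_sum]
      at hsum
    have hsum' : 2 * G M + μ / 4 * S ≤ G x + G xs := hsum
    linarith
  -- step C : per-step bound
  have hC : ∀ s ∈ Finset.Icc 1 H, G (Xs s) - G (Xs (s - 1))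
      ≤ 3 * ℓT / 2 * ‖x s - ψ s (x (s - 1)) s‖ ^ 2 := by
    intro s hs
    have hsmem := hs
    rw [Finset.mem_Icc] at hs
    obtain ⟨hs1, hsH⟩ := hs
    set y := x (s - 1) with hy
    set p : ℕ → EuclideanSpace ℝ (Fin m) := ψ s y with hp
    have hpm1 : p (s - 1) = y := (hψ s hsmem y).1
    have hpmin := (hψ s hsmem y).2
    have hs11 : s - 1 + 1 = s := by omega
    have hXsm : ∀ τ, Xs (s - 1) τ = if τ ≤ s - 1 then x τ else p τ := by
      intro τ
      rw [hXsval, hs11]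
    set T : EuclideanSpace ℝ (Fin m) → ℕ → EuclideanSpace ℝ (Fin m) :=
      fun z τ => if τ = s then z else Xs (s - 1) τ with hTdef
    have hTval : ∀ z τ, T z τ = if τ = s then z else Xs (s - 1) τ := fun _ _ => rfl
    have hTs : ∀ z, T z s = z := fun z => by rw [hTval, if_pos rfl]
    have hTsm1 : ∀ z, T z (s - 1) = y := by
      intro z
      rw [hTval, if_neg (by omega), hXsm, if_pos le_rfl]
    have hTzst : T (p s) = Xs (s - 1) := by
      funext τ
      rw [hTval]
      by_cases h : τ = s
      · subst h; rw [if_pos rfl, hXsm, if_neg (by omega)]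
      · rw [if_neg h]
    set Φ : (ℕ → EuclideanSpace ℝ (Fin m)) → ℝ :=
      fun X => ∑ τ ∈ Finset.Icc s H, (f τ (X τ) + c τ (X τ) (X (τ - 1))) with hΦ
    have hΦsplit : ∀ Z : ℕ → EuclideanSpace ℝ (Fin m),
        Φ Z = (f s (Z s) + c s (Z s) (Z (s - 1)))
          + ∑ τ ∈ Finset.Icc (s + 1) H, (f τ (Z τ) + c τ (Z τ) (Z (τ - 1))) := by
      intro Z
      simp only [hΦ]
      rw [show Finset.Icc s H = insert s (Finset.Icc (s + 1) H) from by
        ext τ; simp only [Finset.mem_Icc, Finset.mem_insert]; omega]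
      rw [Finset.sum_insert (by simp only [Finset.mem_Icc]; omega)]
    have head_eq : ∀ z, ∑ τ ∈ Finset.Ico 1 s, (f τ (T z τ) + c τ (T z τ) (T z (τ - 1)))
        = ∑ τ ∈ Finset.Ico 1 s, (f τ (x τ) + c τ (x τ) (x (τ - 1))) := by
      intro z
      apply Finset.sum_congr rfl
      intro τ hτ
      rw [Finset.mem_Ico] at hτ
      have a1 : T z τ = x τ := by rw [hTval, if_neg (by omega), hXsm, if_pos (by omega)]
      have a2 : T z (τ - 1) = x (τ - 1) := by
        rw [hTval, if_neg (by omega), hXsm, if_pos (by omega)]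
      rw [a1, a2]
    have hG_TT : ∀ z w, G (T z) - G (T w) = Φ (T z) - Φ (T w) := by
      intro z w
      simp only [hΦ]
      rw [hsplitAt s hs1 (by omega) (T z), hsplitAt s hs1 (by omega) (T w),
        head_eq z, head_eq w]
      ring
    have hXp : Φ (Xs (s - 1)) = Φ p := by
      apply Finset.sum_congr rfl
      intro τ hτ
      rw [Finset.mem_Icc] at hτ
      have a1 : Xs (s - 1) τ = p τ := by rw [hXsm, if_neg (by omega)]
      have a2 : Xs (s - 1) (τ - 1) = p (τ - 1) := by
        rw [hXsm]
        by_cases h : τ - 1 ≤ s - 1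
        · rw [if_pos h]
          have e : τ - 1 = s - 1 := by omega
          rw [e, hpm1]
        · rw [if_neg h]
      rw [a1, a2]
    have hΦmin : ∀ z, Φ (T (p s)) ≤ Φ (T z) := by
      intro z
      rw [hTzst, hXp]
      exact isMinOn_iff.mp hpmin (T z) (hTsm1 z)
    -- (i)
    have hi : G (Xs s) ≤ G (T (x s)) := by
      rw [hsplitAt (s + 1) (by omega) (by omega) (Xs s),
        hsplitAt (s + 1) (by omega) (by omega) (T (x s))]
      have hhead : ∑ τ ∈ Finset.Ico 1 (s + 1), (f τ (Xs s τ) + c τ (Xs s τ) (Xs s (τ - 1)))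
          = ∑ τ ∈ Finset.Ico 1 (s + 1),
            (f τ (T (x s) τ) + c τ (T (x s) τ) (T (x s) (τ - 1))) := by
        apply Finset.sum_congr rfl
        intro τ hτ
        rw [Finset.mem_Ico] at hτ
        have a1 : Xs s τ = x τ := by rw [hXsval, if_pos (by omega)]
        have a2 : Xs s (τ - 1) = x (τ - 1) := by rw [hXsval, if_pos (by omega)]
        have a3 : T (x s) τ = x τ := by
          rw [hTval]
          by_cases h : τ = s
          · rw [if_pos h, h]
          · rw [if_neg h, hXsm, if_pos (by omega)]
        have a4 : T (x s) (τ - 1) = x (τ - 1) := by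
          rw [hTval]
          by_cases h : τ - 1 = s
          · exact absurd h (by omega)
          · rw [if_neg h, hXsm, if_pos (by omega)]
        rw [a1, a2, a3, a4]
      rw [hhead]
      rcases Nat.lt_or_ge s H with hlt | hge
      · have hs1H' : s + 1 ∈ Finset.Icc 1 H := Finset.mem_Icc.mpr ⟨by omega, by omega⟩
        have hstart : ψ (s + 1) (x s) s = x s := by
          have := (hψ (s + 1) hs1H' (x s)).1
          rwa [Nat.add_sub_cancel] at this
        have hTmem : T (x s) ∈ {X : ℕ → EuclideanSpace ℝ (Fin m) | X (s + 1 - 1) = x s} := by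
          show T (x s) (s + 1 - 1) = x s
          rw [Nat.add_sub_cancel]
          exact hTs (x s)
        have hle := isMinOn_iff.mp (hψ (s + 1) hs1H' (x s)).2 (T (x s)) hTmem
        have heq : ∑ τ ∈ Finset.Icc (s + 1) H, (f τ (Xs s τ) + c τ (Xs s τ) (Xs s (τ - 1)))
            = ∑ τ ∈ Finset.Icc (s + 1) H,
              (f τ (ψ (s + 1) (x s) τ) + c τ (ψ (s + 1) (x s) τ) (ψ (s + 1) (x s) (τ - 1))) := by
          apply Finset.sum_congr rfl
          intro τ hτ
          rw [Finset.mem_Icc] at hτ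
          have a1 : Xs s τ = ψ (s + 1) (x s) τ := by rw [hXsval, if_neg (by omega)]
          have a2 : Xs s (τ - 1) = ψ (s + 1) (x s) (τ - 1) := by
            rw [hXsval]
            by_cases h : τ - 1 ≤ s
            · rw [if_pos h]
              have e : τ - 1 = s := by omega
              rw [e, hstart]
            · rw [if_neg h]
          rw [a1, a2]
        rw [heq]
        exact add_le_add_right hle _
      · have hempty : Finset.Icc (s + 1) H = ∅ := Finset.Icc_eq_empty (by omega)
        simp only [hempty, Finset.sum_empty]
        exact le_rfl
    -- (ii) and conclusion
    rcases Nat.lt_or_ge s H with hlt | hge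
    · -- s < H
      have hs1H' : s + 1 ∈ Finset.Icc 1 H := Finset.mem_Icc.mpr ⟨by omega, by omega⟩
      set F3 : EuclideanSpace ℝ (Fin m) → ℝ :=
        fun z => f s z + c s z y + c (s + 1) (p (s + 1)) z with hF3
      set R : ℝ := f (s + 1) (p (s + 1))
        + ∑ τ ∈ Finset.Icc (s + 2) H, (f τ (p τ) + c τ (p τ) (p (τ - 1))) with hR
      have hΦT : ∀ z, Φ (T z) = F3 z + R := by
        intro z
        rw [hΦsplit (T z), hTs z, hTsm1 z]
        rw [show Finset.Icc (s + 1) H = insert (s + 1) (Finset.Icc (s + 2) H) from by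
          ext τ; simp only [Finset.mem_Icc, Finset.mem_insert]; omega]
        rw [Finset.sum_insert (by simp only [Finset.mem_Icc]; omega)]
        have e3 : T z (s + 1) = p (s + 1) := by
          rw [hTval, if_neg (by omega), hXsm, if_neg (by omega)]
        have e4 : T z (s + 1 - 1) = z := by rw [Nat.add_sub_cancel]; exact hTs z
        rw [e3, e4]
        have e5 : ∑ τ ∈ Finset.Icc (s + 2) H, (f τ (T z τ) + c τ (T z τ) (T z (τ - 1)))
            = ∑ τ ∈ Finset.Icc (s + 2) H, (f τ (p τ) + c τ (p τ) (p (τ - 1))) := by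
          apply Finset.sum_congr rfl
          intro τ hτ
          rw [Finset.mem_Icc] at hτ
          have a1 : T z τ = p τ := by rw [hTval, if_neg (by omega), hXsm, if_neg (by omega)]
          have a2 : T z (τ - 1) = p (τ - 1) := by
            rw [hTval, if_neg (by omega), hXsm, if_neg (by omega)]
          rw [a1, a2]
        rw [e5, hR]
        simp only [hF3]
        ring
      have hminF3 : ∀ z, F3 (p s) ≤ F3 z := by
        intro z
        have h1 := hΦT (p s)
        have h2 := hΦT z
        have h3 := hΦmin z
        linarith
      have hsm : IsLSmooth (ℓT + ℓT + ℓT) F3 := by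
        simp only [hF3]
        exact ((hf s hsmem).2.1.add' (isLSmooth_partial_left (hc s hsmem).2.1 y)).add'
          (isLSmooth_partial_right (hc (s + 1) hs1H').2.1 (p (s + 1)))
      have hquad := hsm.quadGrowth hminF3 (x s)
      have hGdiff : G (T (x s)) - G (T (p s)) = F3 (x s) - F3 (p s) := by
        rw [hG_TT (x s) (p s), hΦT (x s), hΦT (p s)]
        ring
      have hring : (ℓT + ℓT + ℓT) / 2 * ‖x s - p s‖ ^ 2
          = 3 * ℓT / 2 * ‖x s - p s‖ ^ 2 := by ring
      calc G (Xs s) - G (Xs (s - 1)) ≤ G (T (x s)) - G (T (p s)) := by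
            rw [hTzst]
            exact sub_le_sub_right hi _
        _ = F3 (x s) - F3 (p s) := hGdiff
        _ ≤ 3 * ℓT / 2 * ‖x s - p s‖ ^ 2 := by linarith
    · -- s = H
      set F2 : EuclideanSpace ℝ (Fin m) → ℝ := fun z => f s z + c s z y with hF2
      have hempty : Finset.Icc (s + 1) H = ∅ := Finset.Icc_eq_empty (by omega)
      have hΦT : ∀ z, Φ (T z) = F2 z := by
        intro z
        rw [hΦsplit (T z), hTs z, hTsm1 z, hempty, Finset.sum_empty]
        simp only [hF2]
        ring
      have hminF2 : ∀ z, F2 (p s) ≤ F2 z := by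
        intro z
        have h1 := hΦT (p s)
        have h2 := hΦT z
        have h3 := hΦmin z
        linarith
      have hsm : IsLSmooth (ℓT + ℓT) F2 := by
        simp only [hF2]
        exact (hf s hsmem).2.1.add' (isLSmooth_partial_left (hc s hsmem).2.1 y)
      have hquad := hsm.quadGrowth hminF2 (x s)
      have hGdiff : G (T (x s)) - G (T (p s)) = F2 (x s) - F2 (p s) := by
        rw [hG_TT (x s) (p s), hΦT (x s), hΦT (p s)]
      have hnn : (0:ℝ) ≤ ‖x s - p s‖ ^ 2 := by positivity
      calc G (Xs s) - G (Xs (s - 1)) ≤ G (T (x s)) - G (T (p s)) := by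
            rw [hTzst]
            exact sub_le_sub_right hi _
        _ = F2 (x s) - F2 (p s) := hGdiff
        _ ≤ 3 * ℓT / 2 * ‖x s - p s‖ ^ 2 := by
            have h4 : (0:ℝ) ≤ ℓT / 2 * ‖x s - p s‖ ^ 2 :=
              mul_nonneg (by linarith) hnn
            linarith
  -- telescoping
  have htel : G x - G xs = ∑ s ∈ Finset.Icc 1 H, (G (Xs s) - G (Xs (s - 1))) := by
    rw [← Finset.Ico_add_one_right_eq_Icc, Finset.sum_Ico_eq_sum_range]
    have e3 : H + 1 - 1 = H := by omega
    rw [e3]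
    have hcongr : ∀ i ∈ Finset.range H,
        G (Xs (1 + i)) - G (Xs (1 + i - 1)) = G (Xs (i + 1)) - G (Xs i) := by
      intro i _
      have e1 : 1 + i = i + 1 := by omega
      have e2 : 1 + i - 1 = i := by omega
      rw [e2, e1]
    rw [Finset.sum_congr rfl hcongr, Finset.sum_range_sub (fun i => G (Xs i)) H, hA, hB]
  have hCs := Finset.sum_le_sum hC
  rw [← Finset.mul_sum] at hCs
  rw [← hEσdef] at hCs
  rw [htel] at hE
  have hmain : μ / 4 * S ≤ 3 * ℓT / 2 * Eσ := le_trans hE hCs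
  have hEσ0 : 0 ≤ Eσ := by
    rw [hEσdef]; positivity
  have hS3a : S ≤ 6 * ℓT / μ * Eσ := by
    have h1 : μ * S ≤ 6 * ℓT * Eσ := by linarith
    rw [show (6:ℝ) * ℓT / μ * Eσ = 6 * ℓT * Eσ / μ by ring, le_div_iff₀ hμ]
    nlinarith
  set a := 2 * ℓT / μ with haa
  have ha2 : 2 ≤ a := by
    rw [haa, le_div_iff₀ hμ]
    linarith
  have hsq : Real.sqrt (1 + a) ^ 2 = 1 + a := Real.sq_sqrt (by linarith)
  have hsq1 : 1 ≤ Real.sqrt (1 + a) := by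
    have := Real.sqrt_le_sqrt (show (1:ℝ) ≤ 1 + a by linarith)
    rwa [Real.sqrt_one] at this
  have hmax : max 1 a = a := max_eq_right (by linarith)
  have hden : 1 - (1 - 2 / (Real.sqrt (1 + a) + 1)) = 2 / (Real.sqrt (1 + a) + 1) := by ring
  rw [hmax, hden]
  have hne : Real.sqrt (1 + a) + 1 ≠ 0 := by positivity
  have hKc : a ^ 2 / (2 / (Real.sqrt (1 + a) + 1)) ^ 2
      = a ^ 2 * (Real.sqrt (1 + a) + 1) ^ 2 / 4 := by
    have h2 : ((2:ℝ) / (Real.sqrt (1 + a) + 1)) ^ 2 = 4 / (Real.sqrt (1 + a) + 1) ^ 2 := by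
      rw [div_pow]; norm_num
    rw [h2, div_div_eq_mul_div]
  have h6 : 6 * ℓT / μ = 3 * a := by rw [haa]; ring
  have hfin : 3 * a ≤ a ^ 2 * (Real.sqrt (1 + a) + 1) ^ 2 / 4 := by
    nlinarith [hsq, hsq1, ha2, sq_nonneg (Real.sqrt (1 + a) - 1),
      mul_nonneg (mul_nonneg (by linarith : (0:ℝ) ≤ a) (by linarith : (0:ℝ) ≤ a))
        (by linarith : (0:ℝ) ≤ Real.sqrt (1 + a) - 1),
      mul_nonneg (by linarith : (0:ℝ) ≤ a - 2) (by linarith : (0:ℝ) ≤ a + 6)]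
  calc S ≤ 6 * ℓT / μ * Eσ := hS3a
    _ = 3 * a * Eσ := by rw [h6]
    _ ≤ a ^ 2 * (Real.sqrt (1 + a) + 1) ^ 2 / 4 * Eσ := mul_le_mul_of_nonneg_right hfin hEσ0
    _ = a ^ 2 / (2 / (Real.sqrt (1 + a) + 1)) ^ 2 * Eσ := by rw [hKc]

end
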